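/- For every natural number i with 1 ≤ i ≤ k ≤ n, the polynomial h_i(x_1,...,x_{n-i+1}) belongs to the ideal generated by e_1(x_1,...,x_n), ..., e_k(x_1,...,x_n) in the polynomial ring in n variables. -/

import Mathlib

open MvPolynomial Finset

/-- Elementary symmetric polynomial of degree `k` in the first `m` variables `x_1,…,x_m`
(0-indexed: the variables `X i` with `(i : ℕ) < m`), viewed in the polynomial ring in
`n` variables. It is `1` for `k = 0` and `0` for `k > m`. -/
noncomputable def esymb (R : Type) [CommRing R] (n m k : ℕ) : MvPolynomial (Fin n) R :=
  ∑ S ∈ (Finset.univ.filter (fun i : Fin n => (i : ℕ) < m)).powersetCard k, ∏ i ∈ S, X i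

/-- Complete homogeneous symmetric polynomial of degree `k` in the first `m` variables
`x_1,…,x_m` (0-indexed: the variables `X i` with `(i : ℕ) < m`), viewed in the polynomial
ring in `n` variables. It is `1` for `k = 0` and, for `k > 0`, it is `0` when `m = 0`. -/
noncomputable def hsymb (R : Type) [CommRing R] (n m k : ℕ) : MvPolynomial (Fin n) R :=
  ∑ μ ∈ (Finset.univ.filter (fun i : Fin n => (i : ℕ) < m)).sym k,
    ((μ : Multiset (Fin n)).map X).prod

namespace Stmt7Aux

variable (R : Type) [CommRing R] (n : ℕ)

/-- The set of the first `m` variables. -/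
noncomputable abbrev lows (m : ℕ) : Finset (Fin n) :=
  Finset.univ.filter (fun i : Fin n => (i : ℕ) < m)

lemma lows_zero : lows n 0 = ∅ := by simp [lows]

lemma lows_succ {m : ℕ} (hm : m < n) :
    lows n (m + 1) = insert ⟨m, hm⟩ (lows n m) := by
  ext i
  simp only [lows, mem_filter, mem_univ, true_and, mem_insert, Fin.ext_iff]
  omega

lemma mk_not_mem_lows {m : ℕ} (hm : m < n) : (⟨m, hm⟩ : Fin n) ∉ lows n m := by
  simp [lows]

lemma esymb_zero (m : ℕ) : esymb R n m 0 = 1 := by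
  simp [esymb]

lemma hsymb_zero (m : ℕ) : hsymb R n m 0 = 1 := by
  rw [hsymb, Finset.sym_zero, Finset.sum_singleton]
  rfl

lemma lows_zero' : (Finset.univ.filter (fun i : Fin n => (i : ℕ) < 0)) = (∅ : Finset (Fin n)) := by
  exact Finset.filter_false_of_mem (fun i _ => by omega)

lemma esymb_bot (j : ℕ) : esymb R n 0 (j + 1) = 0 := by
  rw [esymb, lows_zero', Finset.powersetCard_eq_empty.mpr (by simp), Finset.sum_empty]

lemma hsymb_bot (d : ℕ) : hsymb R n 0 (d + 1) = 0 := by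
  rw [hsymb, lows_zero']
  simp

/-- Generic recurrence for sums over `powersetCard` of an insert. -/
lemma pc_sum_rec (s : Finset (Fin n)) (a : Fin n) (hnot : a ∉ s) (j : ℕ) :
    (∑ S ∈ (insert a s).powersetCard (j + 1), ∏ i ∈ S, X i : MvPolynomial (Fin n) R)
      = (∑ S ∈ s.powersetCard (j + 1), ∏ i ∈ S, X i)
        + X a * ∑ S ∈ s.powersetCard j, ∏ i ∈ S, X i := by
  classical
  rw [Finset.powersetCard_succ_insert hnot, Finset.sum_union]
  · congr 1
    rw [Finset.sum_image, Finset.mul_sum]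
    · apply Finset.sum_congr rfl
      intro S hS
      have hmem := Finset.mem_powersetCard.mp hS
      have : a ∉ S := fun h => hnot (hmem.1 h)
      rw [Finset.prod_insert this]
    · intro S hS T hT hST
      have hSm := Finset.mem_powersetCard.mp hS
      have hTm := Finset.mem_powersetCard.mp hT
      have hS' : a ∉ S := fun h => hnot (hSm.1 h)
      have hT' : a ∉ T := fun h => hnot (hTm.1 h)
      rw [← Finset.erase_insert hS', ← Finset.erase_insert hT', hST]
  · rw [Finset.disjoint_left]
    intro S hS hS'
    have hSm := Finset.mem_powersetCard.mp hS
    have : a ∉ S := fun h => hnot (hSm.1 h)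
    obtain ⟨T, hT, rfl⟩ := Finset.mem_image.mp hS'
    exact this (Finset.mem_insert_self _ _)

/-- Recurrence for elementary symmetric polynomials. -/
lemma esymb_rec {m : ℕ} (hm : m < n) (j : ℕ) :
    esymb R n (m + 1) (j + 1)
      = esymb R n m (j + 1) + X (⟨m, hm⟩ : Fin n) * esymb R n m j := by
  show (∑ S ∈ (lows n (m+1)).powersetCard (j+1), ∏ i ∈ S, X i : MvPolynomial (Fin n) R)
      = (∑ S ∈ (lows n m).powersetCard (j+1), ∏ i ∈ S, X i)
        + X (⟨m, hm⟩ : Fin n) * ∑ S ∈ (lows n m).powersetCard j, ∏ i ∈ S, X i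
  rw [lows_succ n hm]
  exact pc_sum_rec R n _ _ (mk_not_mem_lows n hm) j

/-- Generic recurrence for sums over `Finset.sym` of an insert. -/
lemma sym_sum_rec (s : Finset (Fin n)) (a : Fin n) (hnot : a ∉ s) (d : ℕ) :
    (∑ μ ∈ (insert a s).sym (d + 1), ((μ : Multiset (Fin n)).map X).prod
        : MvPolynomial (Fin n) R)
      = (∑ μ ∈ s.sym (d + 1), ((μ : Multiset (Fin n)).map X).prod)
        + X a * ∑ μ ∈ (insert a s).sym d, ((μ : Multiset (Fin n)).map X).prod := by
  classical
  rw [← Finset.sum_filter_add_sum_filter_not ((insert a s).sym (d+1)) (fun μ => a ∈ μ)]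
  have h1 : Finset.filter (fun μ => ¬ a ∈ μ) ((insert a s).sym (d+1)) = s.sym (d+1) := by
    ext μ
    rw [Finset.mem_filter, Finset.mem_sym_iff, Finset.mem_sym_iff]
    constructor
    · rintro ⟨h, hna⟩ b hb
      rcases Finset.mem_insert.mp (h b hb) with rfl | hbs
      · exact absurd hb hna
      · exact hbs
    · intro h
      exact ⟨fun b hb => Finset.mem_insert.mpr (Or.inr (h b hb)),
        fun hc => absurd (h a hc) hnot⟩
  have h2 : (∑ μ ∈ Finset.filter (fun μ => a ∈ μ) ((insert a s).sym (d+1)),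
        ((μ : Multiset (Fin n)).map X).prod : MvPolynomial (Fin n) R)
      = X a * ∑ μ ∈ (insert a s).sym d, ((μ : Multiset (Fin n)).map X).prod := by
    rw [Finset.mul_sum]
    refine Finset.sum_bij'
      (fun μ hμ => μ.erase a (Finset.mem_filter.mp hμ).2)
      (fun ν _ => a ::ₛ ν) ?_ ?_ ?_ ?_ ?_
    · intro μ hμ
      have hμ' := Finset.mem_filter.mp hμ
      rw [Finset.mem_sym_iff]
      intro b hb
      rw [← Sym.mem_coe, Sym.coe_erase] at hb
      exact Finset.mem_sym_iff.mp hμ'.1 b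
        (Sym.mem_coe.mp (Multiset.mem_of_mem_erase hb))
    · intro ν hν
      rw [Finset.mem_filter]
      refine ⟨?_, Sym.mem_cons_self a ν⟩
      rw [Finset.mem_sym_iff]
      intro b hb
      rcases Sym.mem_cons.mp hb with rfl | hb'
      · exact Finset.mem_insert_self _ _
      · exact Finset.mem_sym_iff.mp hν b hb'
    · intro μ hμ
      exact Sym.cons_erase (Finset.mem_filter.mp hμ).2
    · intro ν hν
      exact Sym.erase_cons_head ν a
    · intro μ hμ
      have ham := (Finset.mem_filter.mp hμ).2
      conv_lhs => rw [← Sym.cons_erase ham]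
      rw [Sym.coe_cons, Multiset.map_cons, Multiset.prod_cons]
  rw [h1, h2]
  ring

/-- Recurrence for complete homogeneous symmetric polynomials. -/
lemma hsymb_rec {m : ℕ} (hm : m < n) (d : ℕ) :
    hsymb R n (m + 1) (d + 1)
      = hsymb R n m (d + 1) + X (⟨m, hm⟩ : Fin n) * hsymb R n (m + 1) d := by
  show (∑ μ ∈ (lows n (m+1)).sym (d+1), ((μ : Multiset (Fin n)).map X).prod
        : MvPolynomial (Fin n) R)
      = (∑ μ ∈ (lows n m).sym (d+1), ((μ : Multiset (Fin n)).map X).prod)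
        + X (⟨m, hm⟩ : Fin n) * ∑ μ ∈ (lows n (m+1)).sym d, ((μ : Multiset (Fin n)).map X).prod
  rw [lows_succ n hm]
  exact sym_sum_rec R n _ _ (mk_not_mem_lows n hm) d

/-- The alternating convolution. -/
noncomputable def A (m d : ℕ) : MvPolynomial (Fin n) R :=
  ∑ j ∈ Finset.range (d + 1), (-1 : MvPolynomial (Fin n) R) ^ j
      * esymb R n m j * hsymb R n m (d - j)

lemma A_zero (m : ℕ) : A R n m 0 = 1 := by
  simp [A, esymb_zero, hsymb_zero]

lemma A_eq_zero : ∀ m, m ≤ n → ∀ d, A R n m (d + 1) = 0 := by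
  intro m
  induction m with
  | zero =>
    intro _ d
    apply Finset.sum_eq_zero
    intro j hj
    rcases j with _ | j
    · simp [hsymb_bot]
    · simp [esymb_bot]
  | succ m ih =>
    intro hm d
    have hm' : m < n := hm
    have hmn : m ≤ n := le_of_lt hm'
    induction d with
    | zero =>
      have hA1 : ∀ q, A R n q 1 = hsymb R n q 1 - esymb R n q 1 := by
        intro q
        rw [A, Finset.sum_range_succ, Finset.sum_range_succ, Finset.sum_range_zero]
        rw [esymb_zero, hsymb_zero]
        norm_num
        ring
      have e1 : esymb R n (m+1) 1 = esymb R n m 1 + X (⟨m, hm'⟩ : Fin n) * 1 := by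
        have := esymb_rec R n hm' 0
        rwa [esymb_zero] at this
      have h1 : hsymb R n (m+1) 1 = hsymb R n m 1 + X (⟨m, hm'⟩ : Fin n) * 1 := by
        have := hsymb_rec R n hm' 0
        rwa [hsymb_zero] at this
      have h0 := ih hmn 0
      rw [hA1] at h0 ⊢
      rw [e1, h1]
      linear_combination h0
    | succ d ihd =>
      -- main recurrence: A (m+1) (d+2) = A m (d+2) - x * A m (d+1) + x * A (m+1) (d+1)
      have key : A R n (m+1) (d + 2)
          = A R n m (d + 2) - X (⟨m, hm'⟩ : Fin n) * A R n m (d + 1)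
            + X (⟨m, hm'⟩ : Fin n) * A R n (m+1) (d + 1) := by
        set x : MvPolynomial (Fin n) R := X (⟨m, hm'⟩ : Fin n) with hx
        -- step 1: expand h's
        have step1 : A R n (m+1) (d + 2)
            = (∑ j ∈ Finset.range (d + 3), (-1 : MvPolynomial (Fin n) R) ^ j
                * esymb R n (m+1) j * hsymb R n m (d + 2 - j))
              + x * A R n (m+1) (d + 1) := by
          have : ∀ j ∈ Finset.range (d + 3),
              (-1 : MvPolynomial (Fin n) R) ^ j * esymb R n (m+1) j
                  * hsymb R n (m+1) (d + 2 - j)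
                = (-1 : MvPolynomial (Fin n) R) ^ j * esymb R n (m+1) j
                    * hsymb R n m (d + 2 - j)
                  + x * (if j = d + 2 then 0 else
                      (-1 : MvPolynomial (Fin n) R) ^ j * esymb R n (m+1) j
                        * hsymb R n (m+1) (d + 1 - j)) := by
            intro j hj
            rw [Finset.mem_range] at hj
            by_cases hje : j = d + 2
            · subst hje
              simp only [Nat.sub_self, eq_self_iff_true, if_true, ite_true]
              rw [hsymb_zero, hsymb_zero]
              ring
            · have hjd : j ≤ d + 1 := by omega
              have hsub : d + 2 - j = (d + 1 - j) + 1 := by omega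
              rw [if_neg hje, hsub, hsymb_rec R n hm' (d + 1 - j)]
              ring
          unfold A
          rw [Finset.sum_congr rfl this, Finset.sum_add_distrib]
          congr 1
          rw [Finset.mul_sum]
          rw [Finset.sum_range_succ]
          simp only [eq_self_iff_true, if_true, ite_true, mul_zero, add_zero]
          apply Finset.sum_congr rfl
          intro j hj
          rw [Finset.mem_range] at hj
          rw [if_neg (by omega)]
        -- step 2: expand e's
        have step2 : (∑ j ∈ Finset.range (d + 3), (-1 : MvPolynomial (Fin n) R) ^ j
              * esymb R n (m+1) j * hsymb R n m (d + 2 - j))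
            = A R n m (d + 2) - x * A R n m (d + 1) := by
          have : ∀ j ∈ Finset.range (d + 3),
              (-1 : MvPolynomial (Fin n) R) ^ j * esymb R n (m+1) j
                  * hsymb R n m (d + 2 - j)
                = (-1 : MvPolynomial (Fin n) R) ^ j * esymb R n m j
                    * hsymb R n m (d + 2 - j)
                  + x * (if j = 0 then 0 else
                      (-1 : MvPolynomial (Fin n) R) ^ j * esymb R n m (j - 1)
                        * hsymb R n m (d + 2 - j)) := by
            intro j _
            rcases j with _ | j'
            · simp [esymb_zero]
            · rw [if_neg (Nat.succ_ne_zero _), esymb_rec R n hm' j']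
              simp only [Nat.add_sub_cancel]
              ring
          rw [Finset.sum_congr rfl this, Finset.sum_add_distrib]
          have hA2 : (∑ j ∈ Finset.range (d + 3), (-1 : MvPolynomial (Fin n) R) ^ j
                * esymb R n m j * hsymb R n m (d + 2 - j)) = A R n m (d + 2) := rfl
          rw [hA2]
          have : (∑ j ∈ Finset.range (d + 3),
                x * (if j = 0 then 0 else
                  (-1 : MvPolynomial (Fin n) R) ^ j * esymb R n m (j - 1)
                    * hsymb R n m (d + 2 - j)))
              = - (x * A R n m (d + 1)) := by
            rw [← Finset.mul_sum]
            have hshift : (∑ j ∈ Finset.range (d + 3),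
                  (if j = 0 then 0 else
                    (-1 : MvPolynomial (Fin n) R) ^ j * esymb R n m (j - 1)
                      * hsymb R n m (d + 2 - j)))
                = ∑ j ∈ Finset.range (d + 2),
                    (-1 : MvPolynomial (Fin n) R) ^ (j + 1) * esymb R n m j
                      * hsymb R n m (d + 1 - j) := by
              rw [Finset.sum_range_succ' _ (d + 2)]
              simp only [eq_self_iff_true, if_true, ite_true, add_zero]
              apply Finset.sum_congr rfl
              intro j hj
              rw [if_neg (Nat.succ_ne_zero _)]
              simp only [Nat.add_sub_cancel]
              congr 2
              omega
            rw [hshift]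
            have : (∑ j ∈ Finset.range (d + 2),
                  (-1 : MvPolynomial (Fin n) R) ^ (j + 1) * esymb R n m j
                    * hsymb R n m (d + 1 - j))
                = - A R n m (d + 1) := by
              unfold A
              rw [← Finset.sum_neg_distrib]
              apply Finset.sum_congr rfl
              intro j _
              ring
            rw [this]
            ring
          rw [this]
          ring
        rw [step1, step2]
      rw [key, ih hmn (d + 1), ih hmn d, ihd]
      ring

variable (k : ℕ)

/-- The ideal. -/
noncomputable def I : Ideal (MvPolynomial (Fin n) R) :=
  Ideal.span ((fun j => esymb R n n j) '' Set.Icc 1 k)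

lemma esymb_mem {j : ℕ} (hj1 : 1 ≤ j) (hjk : j ≤ k) : esymb R n n j ∈ I R n k :=
  Ideal.subset_span ⟨j, ⟨hj1, hjk⟩, rfl⟩

lemma hsymb_top_mem (hkn : k ≤ n) {d : ℕ} (hd1 : 1 ≤ d) (hdk : d ≤ k) :
    hsymb R n n d ∈ I R n k := by
  obtain ⟨d', rfl⟩ : ∃ d', d = d' + 1 := ⟨d - 1, by omega⟩
  have hA := A_eq_zero R n n le_rfl d'
  unfold A at hA
  rw [Finset.sum_range_succ' _ (d' + 1)] at hA
  simp only [pow_zero, Nat.sub_zero, one_mul, esymb_zero] at hA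
  have : hsymb R n n (d' + 1)
      = - ∑ j ∈ Finset.range (d' + 1), (-1 : MvPolynomial (Fin n) R) ^ (j + 1)
          * esymb R n n (j + 1) * hsymb R n n (d' + 1 - (j + 1)) := by
    linear_combination hA
  rw [this]
  apply Submodule.neg_mem
  apply Ideal.sum_mem
  intro j hj
  rw [Finset.mem_range] at hj
  have hmem : esymb R n n (j + 1) ∈ I R n k := esymb_mem R n k (by omega) (by omega)
  have : (-1 : MvPolynomial (Fin n) R) ^ (j + 1) * esymb R n n (j + 1)
      * hsymb R n n (d' + 1 - (j + 1))
      = ((-1 : MvPolynomial (Fin n) R) ^ (j + 1) * hsymb R n n (d' + 1 - (j + 1)))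
        * esymb R n n (j + 1) := by ring
  rw [this]
  exact Ideal.mul_mem_left _ _ hmem

lemma hsymb_mem (hkn : k ≤ n) :
    ∀ t d, 1 ≤ d → d ≤ k → t < d → t ≤ n → hsymb R n (n - t) d ∈ I R n k := by
  intro t
  induction t with
  | zero =>
    intro d hd1 hdk _ _
    simpa using hsymb_top_mem R n k hkn hd1 hdk
  | succ t ih =>
    intro d hd1 hdk htd htn
    have hm : n - (t + 1) < n := by omega
    obtain ⟨d', rfl⟩ : ∃ d', d = d' + 1 := ⟨d - 1, by omega⟩
    have hd' : 1 ≤ d' := by omega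
    have hrec := hsymb_rec R n hm d'
    have hsucc : n - (t + 1) + 1 = n - t := by omega
    rw [hsucc] at hrec
    have h1 : hsymb R n (n - t) (d' + 1) ∈ I R n k := ih (d' + 1) hd1 hdk (by omega) (by omega)
    have h2 : hsymb R n (n - t) d' ∈ I R n k := ih d' hd' (by omega) (by omega) (by omega)
    have : hsymb R n (n - (t + 1)) (d' + 1)
        = hsymb R n (n - t) (d' + 1) - X (⟨n - (t+1), hm⟩ : Fin n) * hsymb R n (n - t) d' := by
      linear_combination -hrec
    rw [this]
    exact Ideal.sub_mem _ h1 (Ideal.mul_mem_left _ _ h2)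

end Stmt7Aux

/-- h_i(x_1,…,x_{n+1-i}) ∈ ⟨e_1(x_1,…,x_n),…,e_k(x_1,…,x_n)⟩ for 1 ≤ i ≤ k ≤ n. -/
theorem stmt7 (R : Type) [CommRing R] (n k i : ℕ) (hi : 1 ≤ i) (hik : i ≤ k) (hkn : k ≤ n) :
    hsymb R n (n + 1 - i) i ∈ Ideal.span ((fun j => esymb R n n j) '' Set.Icc 1 k) := by
  have := Stmt7Aux.hsymb_mem R n k hkn (i - 1) i hi hik (by omega) (by omega)
  have heq : n - (i - 1) = n + 1 - i := by omega
  rw [heq] at this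
  exact this
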